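/- Let V be a finite-dimensional complex vector space and let W ⊆ V be a subset that is both a Zariski-closed algebraic subset of V and a union of at most countably many linear subspaces of V. Then W is a finite union of linear subspaces of V. -/

import Mathlib

open MvPolynomial

namespace Stmt0Aux

variable {n : ℕ}

/-- Zariski-closed subsets of `ℂⁿ`. -/
def ZC (n : ℕ) (C : Set (Fin n → ℂ)) : Prop :=
  ∃ I : Ideal (MvPolynomial (Fin n) ℂ), C = zeroLocus ℂ I

lemma zeroLocus_sup (I J : Ideal (MvPolynomial (Fin n) ℂ)) :
    zeroLocus ℂ (I ⊔ J) = zeroLocus ℂ I ∩ zeroLocus ℂ J := by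
  apply le_antisymm
  · intro x hx
    exact ⟨fun p hp => hx p (Ideal.mem_sup_left hp), fun p hp => hx p (Ideal.mem_sup_right hp)⟩
  · rintro x ⟨hx1, hx2⟩ p hp
    obtain ⟨a, ha, b, hb, rfl⟩ := Submodule.mem_sup.mp hp
    show eval x (a + b) = 0
    have e1 : eval x a = 0 := hx1 a ha
    have e2 : eval x b = 0 := hx2 b hb
    rw [map_add, e1, e2, add_zero]

lemma zeroLocus_inf (I J : Ideal (MvPolynomial (Fin n) ℂ)) :
    zeroLocus ℂ (I ⊓ J) = zeroLocus ℂ I ∪ zeroLocus ℂ J := by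
  apply le_antisymm
  · intro x hx
    by_contra hc
    simp only [Set.mem_union, mem_zeroLocus_iff, not_or, not_forall] at hc
    obtain ⟨⟨p, hp, hpx⟩, ⟨q, hq, hqx⟩⟩ := hc
    have hpq : p * q ∈ I ⊓ J :=
      ⟨Ideal.mul_mem_right q I hp, Ideal.mul_mem_left J p hq⟩
    have := hx _ hpq
    rw [map_mul] at this
    exact (mul_ne_zero hpx hqx) this
  · intro x hx p hp
    rcases hx with hx | hx
    · exact hx p hp.1
    · exact hx p hp.2

lemma ZC.empty : ZC n ∅ := ⟨⊤, by rw [MvPolynomial.zeroLocus_top]; rfl⟩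

lemma ZC.union {A B : Set (Fin n → ℂ)} (hA : ZC n A) (hB : ZC n B) : ZC n (A ∪ B) := by
  obtain ⟨I, rfl⟩ := hA
  obtain ⟨J, rfl⟩ := hB
  exact ⟨I ⊓ J, (zeroLocus_inf I J).symm⟩

lemma ZC.inter {A B : Set (Fin n → ℂ)} (hA : ZC n A) (hB : ZC n B) : ZC n (A ∩ B) := by
  obtain ⟨I, rfl⟩ := hA
  obtain ⟨J, rfl⟩ := hB
  exact ⟨I ⊔ J, (zeroLocus_sup I J).symm⟩

lemma ZC.biUnion (s : Finset ℕ) (D : ℕ → Set (Fin n → ℂ)) (hD : ∀ j, ZC n (D j)) :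
    ZC n (⋃ j ∈ s, D j) := by
  classical
  induction s using Finset.induction_on with
  | empty => simpa using ZC.empty
  | insert a s' hx ih =>
      rw [Finset.set_biUnion_insert]
      exact (hD a).union ih

/-- A closed set is the zero locus of its vanishing ideal. -/
lemma ZC.zeroLocus_vanishingIdeal {C : Set (Fin n → ℂ)} (hC : ZC n C) :
    zeroLocus ℂ (vanishingIdeal ℂ C) = C := by
  obtain ⟨I, rfl⟩ := hC
  apply le_antisymm
  · exact zeroLocus_anti_mono (le_vanishingIdeal_zeroLocus I)
  · exact zeroLocus_vanishingIdeal_le _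

lemma vi_lt_of_ssubset {C C' : Set (Fin n → ℂ)} (hC : ZC n C) (h : C ⊂ C') :
    vanishingIdeal ℂ C' < vanishingIdeal ℂ C := by
  constructor
  · exact vanishingIdeal_anti_mono h.subset
  · intro hle
    obtain ⟨x, hxC', hxC⟩ := Set.exists_of_ssubset h
    obtain ⟨I, rfl⟩ := hC
    have hx2 : x ∉ zeroLocus ℂ I := hxC
    simp only [mem_zeroLocus_iff] at hx2
    push_neg at hx2
    obtain ⟨p, hpI, hpx⟩ := hx2
    have hp1 : p ∈ vanishingIdeal ℂ (zeroLocus ℂ I) := le_vanishingIdeal_zeroLocus I hpI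
    have hp2 : p ∈ vanishingIdeal ℂ C' := hle hp1
    exact hpx (hp2 x hxC')


/-- Evaluation of the degree-one polynomial attached to a linear functional. -/
lemma eval_linear (φ : (Fin n → ℂ) →ₗ[ℂ] ℂ) (v : Fin n → ℂ) :
    eval v (∑ i : Fin n, C (φ (fun j => if i = j then 1 else 0)) * X i) = φ v := by
  classical
  rw [map_sum]
  simp only [map_mul, eval_C, eval_X]
  conv_rhs => rw [pi_eq_sum_univ v, map_sum]
  refine Finset.sum_congr rfl fun i _ => ?_
  rw [map_smul]
  simp [mul_comm, smul_eq_mul]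

lemma subspace_ZC (g : Submodule ℂ (Fin n → ℂ)) : ZC n (g : Set (Fin n → ℂ)) := by
  classical
  refine ⟨vanishingIdeal ℂ (g : Set (Fin n → ℂ)), le_antisymm (zeroLocus_vanishingIdeal_le _) ?_⟩
  intro x hx
  by_contra hxg
  obtain ⟨q, hq⟩ := Submodule.exists_isCompl g
  set π := q.linearProjOfIsCompl g hq.symm with hπ
  have hπx : π x ≠ 0 := by
    rw [Ne, hπ]
    exact fun h => hxg ((Submodule.projectionOnto_apply_eq_zero_iff hq.symm).mp h)
  have hπxv : (π x : Fin n → ℂ) ≠ 0 := by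
    simpa [Submodule.coe_eq_zero] using hπx
  obtain ⟨j, hj⟩ : ∃ j, (π x : Fin n → ℂ) j ≠ 0 := by
    by_contra hcon
    push_neg at hcon
    exact hπxv (funext hcon)
  set φ : (Fin n → ℂ) →ₗ[ℂ] ℂ := (LinearMap.proj j).comp (q.subtype.comp π) with hφ
  set p : MvPolynomial (Fin n) ℂ :=
    ∑ i : Fin n, C (φ (fun j => if i = j then 1 else 0)) * X i with hp
  have hpvan : p ∈ vanishingIdeal ℂ (g : Set (Fin n → ℂ)) := by
    intro y hy
    show eval y p = 0
    rw [hp, eval_linear φ y]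
    have hy0 : π y = 0 := Submodule.linearProjOfIsCompl_apply_right hq.symm ⟨y, hy⟩
    rw [hφ]
    simp [hy0]
  have heval : eval x p = 0 := hx p hpvan
  rw [hp, eval_linear φ x] at heval
  exact hj heval


/-- An algebra generated by a countable set has countable dimension. -/
lemma rank_le_aleph0_of_adjoin {A : Type} [CommRing A] [Algebra ℂ A] {s : Set A}
    (hs : s.Countable) (hadj : Algebra.adjoin ℂ s = ⊤) :
    Module.rank ℂ A ≤ Cardinal.aleph0 := by
  have h1 : Submodule.span ℂ (↑(Submonoid.closure s) : Set A) = ⊤ := by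
    have h := Algebra.adjoin_eq_span ℂ s
    rw [hadj] at h
    rw [← h]
    rfl
  have h2 : ((Submonoid.closure s : Submonoid A) : Set A).Countable := by
    rw [Submonoid.closure_eq_image_prod]
    refine Set.Countable.image ?_ _
    have : Countable s := hs.to_subtype
    have hsub : {l : List A | ∀ x ∈ l, x ∈ s} ⊆
        Set.range (fun l : List s => l.map Subtype.val) := by
      intro l hl
      refine ⟨l.attach.map (fun x => ⟨x.1, hl x.1 x.2⟩), ?_⟩
      simp [List.map_map, Function.comp]
    exact (Set.countable_range _).mono hsub
  have : Countable ((Submonoid.closure s : Submonoid A) : Set A) := h2.to_subtype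
  calc Module.rank ℂ A = Module.rank ℂ (⊤ : Submodule ℂ A) := (rank_top ℂ A).symm
    _ = Module.rank ℂ (Submodule.span ℂ (↑(Submonoid.closure s) : Set A)) := by rw [h1]
    _ ≤ Cardinal.mk ((Submonoid.closure s : Submonoid A) : Set A) := rank_span_le _
    _ ≤ Cardinal.aleph0 := Cardinal.mk_le_aleph0

/-- Amitsur's trick: in a domain of countable dimension over `ℂ`, an element `lam` such that
`lam - t` is invertible for uncountably many `t : ℂ` must be a scalar. -/
lemma amitsur {A : Type} [CommRing A] [IsDomain A] [Algebra ℂ A]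
    (hrank : Module.rank ℂ A ≤ Cardinal.aleph0)
    (lam : A) (T : Set ℂ) (hT : ¬ T.Countable)
    (hu : ∀ t ∈ T, IsUnit (lam - algebraMap ℂ A t)) :
    ∃ r : ℂ, lam = algebraMap ℂ A r := by
  classical
  have hchoice : ∀ t : T, ∃ u : A, (lam - algebraMap ℂ A (t : ℂ)) * u = 1 := by
    rintro ⟨t, ht⟩
    obtain ⟨u, hu'⟩ := (hu t ht).exists_right_inv
    exact ⟨u, hu'⟩
  choose u hu' using hchoice
  have hnli : ¬ LinearIndependent ℂ u := by
    intro h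
    have hle := h.cardinal_le_rank
    have : Countable T := by
      rw [← Cardinal.mk_le_aleph0_iff]
      exact hle.trans hrank
    exact hT (Set.countable_coe_iff.mp this)
  rw [not_linearIndependent_iff] at hnli
  obtain ⟨s, g, hsum, t₀, ht₀s, hg₀⟩ := hnli
  set v : T → A := fun t => lam - algebraMap ℂ A (t : ℂ) with hv
  set q : Polynomial ℂ :=
    ∑ t ∈ s, Polynomial.C (g t) * ∏ t' ∈ s.erase t, (Polynomial.X - Polynomial.C (t' : ℂ))
    with hq
  have hq0 : q ≠ 0 := by
    intro h0
    have he := congrArg (Polynomial.eval (t₀ : ℂ)) h0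
    rw [hq] at he
    rw [Polynomial.eval_finset_sum] at he
    rw [Finset.sum_eq_single t₀] at he
    · simp only [Polynomial.eval_mul, Polynomial.eval_C, Polynomial.eval_prod,
        Polynomial.eval_sub, Polynomial.eval_X, Polynomial.eval_zero] at he
      have hne : ∀ t' ∈ s.erase t₀, ((t₀ : ℂ) - (t' : ℂ)) ≠ 0 := by
        intro t' ht'
        have : t' ≠ t₀ := Finset.ne_of_mem_erase ht'
        have : (t' : ℂ) ≠ (t₀ : ℂ) := fun hc => this (Subtype.ext hc)
        exact sub_ne_zero.mpr (Ne.symm this)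
      have : ∏ t' ∈ s.erase t₀, ((t₀ : ℂ) - (t' : ℂ)) ≠ 0 := Finset.prod_ne_zero_iff.mpr hne
      exact (mul_ne_zero hg₀ this) he
    · intro b hb hbne
      simp only [Polynomial.eval_mul, Polynomial.eval_C, Polynomial.eval_prod,
        Polynomial.eval_sub, Polynomial.eval_X]
      have ht₀e : t₀ ∈ s.erase b := Finset.mem_erase.mpr ⟨Ne.symm hbne, ht₀s⟩
      rw [Finset.prod_eq_zero ht₀e (by ring)]
      ring
    · intro h
      exact absurd ht₀s h
  have haev : Polynomial.aeval lam q = 0 := by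
    have key : (∑ t ∈ s, g t • u t) * ∏ t' ∈ s, v t' = Polynomial.aeval lam q := by
      rw [Finset.sum_mul]
      rw [hq, map_sum]
      refine Finset.sum_congr rfl fun t ht => ?_
      rw [map_mul, Polynomial.aeval_C, map_prod]
      simp only [map_sub, Polynomial.aeval_X, Polynomial.aeval_C]
      rw [smul_mul_assoc, Algebra.smul_def]
      congr 1
      rw [← Finset.mul_prod_erase s v ht]
      rw [← mul_assoc, mul_comm (u t) (v t), hu' t, one_mul]
    rw [← key, hsum, zero_mul]
  have hsplit : Polynomial.Splits q := IsAlgClosed.splits q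
  have hfact := hsplit.eq_prod_roots
  have := congrArg (Polynomial.aeval lam) hfact
  rw [haev, map_mul, Polynomial.aeval_C, map_multiset_prod, Multiset.map_map] at this
  have hinj : Function.Injective (algebraMap ℂ A) := RingHom.injective _
  have hlc : algebraMap ℂ A q.leadingCoeff ≠ 0 := by
    intro hc
    apply Polynomial.leadingCoeff_ne_zero.mpr hq0
    apply hinj
    rw [hc, map_zero]
  have hprod : (Multiset.map (fun a => Polynomial.aeval lam (Polynomial.X - Polynomial.C a))
      q.roots).prod = 0 := by
    rcases mul_eq_zero.mp this.symm with h | h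
    · exact absurd h hlc
    · exact h
  simp only [map_sub, Polynomial.aeval_X, Polynomial.aeval_C] at hprod
  rw [Multiset.prod_eq_zero_iff] at hprod
  obtain ⟨a, _, ha⟩ := Multiset.mem_map.mp hprod
  exact ⟨a, by rw [sub_eq_zero] at ha; exact ha⟩


lemma mk_one_pow {R : Type} [CommRing R] (b : R) (k : ℕ) :
    (Localization.mk 1 ⟨b, Submonoid.mem_powers b⟩ : Localization.Away b) ^ k
      = Localization.mk 1 ⟨b ^ k, pow_mem (Submonoid.mem_powers b) k⟩ := by
  induction k with
  | zero =>
      rw [pow_zero]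
      have h1 : (⟨b ^ 0, pow_mem (Submonoid.mem_powers b) 0⟩ : Submonoid.powers b) = 1 := by
        ext; simp
      rw [h1, Localization.mk_one]
  | succ k ih =>
      rw [pow_succ, ih, Localization.mk_mul]
      congr 1
      · simp
      · ext; simp [pow_succ]

set_option synthInstance.maxHeartbeats 1000000 in
set_option maxHeartbeats 1600000 in
lemma rank_away_le (P : Ideal (MvPolynomial (Fin n) ℂ)) (b : MvPolynomial (Fin n) ℂ ⧸ P) :
    Module.rank ℂ (Localization.Away b) ≤ Cardinal.aleph0 := by
  classical
  set invb : Localization.Away b := Localization.mk 1 ⟨b, Submonoid.mem_powers b⟩ with hinvb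
  set s : Set (Localization.Away b) :=
    Set.range (fun i : Fin n => algebraMap (MvPolynomial (Fin n) ℂ ⧸ P) (Localization.Away b)
      (Ideal.Quotient.mk P (X i))) ∪ {invb} with hs
  apply rank_le_aleph0_of_adjoin (s := s)
  · exact ((Set.finite_range _).countable).union (Set.countable_singleton _)
  · rw [eq_top_iff]
    intro z _
    set B := Algebra.adjoin ℂ s with hB
    have step1 : ∀ p : MvPolynomial (Fin n) ℂ,
        algebraMap (MvPolynomial (Fin n) ℂ ⧸ P) (Localization.Away b)
          (Ideal.Quotient.mk P p) ∈ B := by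
      intro p
      induction p using MvPolynomial.induction_on with
      | C c =>
          have hcc : algebraMap (MvPolynomial (Fin n) ℂ ⧸ P) (Localization.Away b)
              (Ideal.Quotient.mk P (C c)) = algebraMap ℂ (Localization.Away b) c := by
            rw [IsScalarTower.algebraMap_apply ℂ (MvPolynomial (Fin n) ℂ ⧸ P)
              (Localization.Away b)]
            rfl
          rw [hcc]
          exact Subalgebra.algebraMap_mem B c
      | add p q hp hq =>
          rw [map_add, map_add]
          exact add_mem hp hq
      | mul_X p i hp =>
          rw [map_mul, map_mul]
          exact mul_mem hp (Algebra.subset_adjoin (Or.inl ⟨i, rfl⟩))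
    have step2 : invb ∈ B := Algebra.subset_adjoin (Or.inr rfl)
    obtain ⟨⟨r, d⟩, rfl⟩ : ∃ y : (MvPolynomial (Fin n) ℂ ⧸ P) × (Submonoid.powers b),
        Localization.mk y.1 y.2 = z := by
      refine Localization.induction_on z fun y => ⟨y, rfl⟩
    obtain ⟨k, hk⟩ := d.2
    have hd : d = ⟨b ^ k, pow_mem (Submonoid.mem_powers b) k⟩ := Subtype.ext hk.symm
    have hmk : Localization.mk r d
        = algebraMap (MvPolynomial (Fin n) ℂ ⧸ P) (Localization.Away b) r * invb ^ k := by
      rw [hd, mk_one_pow, ← Localization.mk_one_eq_algebraMap, Localization.mk_mul]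
      congr 1
      · ring
      · ext; simp
    rw [hmk]
    obtain ⟨p', rfl⟩ := Ideal.Quotient.mk_surjective r
    exact mul_mem (step1 p') (pow_mem step2 k)


set_option maxHeartbeats 1600000 in
set_option synthInstance.maxHeartbeats 1000000 in
/-- Key lemma: a Zariski-closed subset of `ℂⁿ` covered by countably many Zariski-closed
sets is covered by finitely many of them. -/
lemma finite_subcover (C : Set (Fin n → ℂ)) (hC : ZC n C)
    (D : ℕ → Set (Fin n → ℂ)) (hD : ∀ j, ZC n (D j)) (hcov : C ⊆ ⋃ j, D j) :
    ∃ J : Finset ℕ, C ⊆ ⋃ j ∈ J, D j := by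
  classical
  have hwf : WellFounded (InvImage ((· > ·) : Ideal (MvPolynomial (Fin n) ℂ) →
      Ideal (MvPolynomial (Fin n) ℂ) → Prop) (fun C : Set (Fin n → ℂ) => vanishingIdeal ℂ C)) :=
    InvImage.wf _ (IsWellFounded.wf)
  revert hC hcov
  refine hwf.induction
    (C := fun C => ZC n C → C ⊆ (⋃ j, D j) → ∃ J : Finset ℕ, C ⊆ ⋃ j ∈ J, D j) C ?_
  clear C
  intro C IH hC hcov
  by_cases hemp : C = ∅
  · exact ⟨∅, by simp [hemp]⟩
  have hCne : C.Nonempty := Set.nonempty_iff_ne_empty.mpr hemp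
  have hCzl : zeroLocus ℂ (vanishingIdeal ℂ C) = C := hC.zeroLocus_vanishingIdeal
  by_cases hprime : (vanishingIdeal ℂ C).IsPrime
  -- Reducible case: split into two strictly smaller closed sets
  case neg =>
    have hPne : vanishingIdeal ℂ C ≠ ⊤ := by
      intro h
      obtain ⟨x, hx⟩ := hCne
      have h1 : (1 : MvPolynomial (Fin n) ℂ) ∈ vanishingIdeal ℂ C := h ▸ Submodule.mem_top
      have := mem_vanishingIdeal_iff.mp h1 x hx
      simp at this
    have hex : ∃ p q : MvPolynomial (Fin n) ℂ,
        p * q ∈ vanishingIdeal ℂ C ∧ p ∉ vanishingIdeal ℂ C ∧ q ∉ vanishingIdeal ℂ C := by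
      by_contra hcon
      push_neg at hcon
      apply hprime
      rw [Ideal.isPrime_iff]
      refine ⟨hPne, ?_⟩
      intro x y hxy
      by_contra hxyn
      push_neg at hxyn
      exact hxyn.2 (hcon x y hxy hxyn.1)
    obtain ⟨p, q, hpq, hp, hq⟩ := hex
    set A := C ∩ zeroLocus ℂ (Ideal.span {p}) with hA
    set Bs := C ∩ zeroLocus ℂ (Ideal.span {q}) with hBs
    have hAzc : ZC n A := hC.inter ⟨_, rfl⟩
    have hBzc : ZC n Bs := hC.inter ⟨_, rfl⟩
    have hAC : A ⊂ C := by
      refine ⟨Set.inter_subset_left, ?_⟩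
      intro hcc
      apply hp
      rw [mem_vanishingIdeal_iff]
      intro x hx
      exact (hcc hx).2 p (Ideal.subset_span rfl)
    have hBC : Bs ⊂ C := by
      refine ⟨Set.inter_subset_left, ?_⟩
      intro hcc
      apply hq
      rw [mem_vanishingIdeal_iff]
      intro x hx
      exact (hcc hx).2 q (Ideal.subset_span rfl)
    have hABC : C ⊆ A ∪ Bs := by
      intro x hx
      have h0 : aeval x (p * q) = 0 := mem_vanishingIdeal_iff.mp hpq x hx
      rw [map_mul] at h0
      rcases mul_eq_zero.mp h0 with h | h
      · left
        refine ⟨hx, fun r hr => ?_⟩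
        obtain ⟨a, rfl⟩ := Ideal.mem_span_singleton'.mp hr
        rw [map_mul, h, mul_zero]
      · right
        refine ⟨hx, fun r hr => ?_⟩
        obtain ⟨a, rfl⟩ := Ideal.mem_span_singleton'.mp hr
        rw [map_mul, h, mul_zero]
    obtain ⟨JA, hJA⟩ := IH A (vi_lt_of_ssubset hAzc hAC) hAzc (hAC.subset.trans hcov)
    obtain ⟨JB, hJB⟩ := IH Bs (vi_lt_of_ssubset hBzc hBC) hBzc (hBC.subset.trans hcov)
    refine ⟨JA ∪ JB, ?_⟩
    intro x hx
    rcases hABC hx with h | h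
    · obtain ⟨j, hj1, hj2⟩ := Set.mem_iUnion₂.mp (hJA h)
      exact Set.mem_iUnion₂.mpr ⟨j, Finset.mem_union_left _ hj1, hj2⟩
    · obtain ⟨j, hj1, hj2⟩ := Set.mem_iUnion₂.mp (hJB h)
      exact Set.mem_iUnion₂.mpr ⟨j, Finset.mem_union_right _ hj1, hj2⟩
  -- Irreducible case
  case pos =>
    haveI : (vanishingIdeal ℂ C).IsPrime := hprime
    by_cases hsing : ∀ x ∈ C, ∀ y ∈ C, x = y
    · obtain ⟨c, hc⟩ := hCne
      obtain ⟨j, hj⟩ : ∃ j, c ∈ D j := Set.mem_iUnion.mp (hcov hc)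
      refine ⟨{j}, fun x hx => ?_⟩
      have hxc : x = c := hsing x hx c hc
      exact Set.mem_iUnion₂.mpr ⟨j, Finset.mem_singleton_self j, hxc ▸ hj⟩
    · push_neg at hsing
      obtain ⟨a, ha, b0, hb0, hab⟩ := hsing
      obtain ⟨i, hi⟩ : ∃ i, a i ≠ b0 i := by
        by_contra hcon
        push_neg at hcon
        exact hab (funext hcon)
      set lt : ℂ → MvPolynomial (Fin n) ℂ := fun t => X i - MvPolynomial.C t with hlt
      set It : ℂ → Ideal (MvPolynomial (Fin n) ℂ) :=
        fun t => vanishingIdeal ℂ C ⊔ Ideal.span {lt t} with hIt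
      set Ct : ℂ → Set (Fin n → ℂ) := fun t => zeroLocus ℂ (It t) with hCt
      have hCtzc : ∀ t, ZC n (Ct t) := fun t => ⟨It t, rfl⟩
      have hCtsub : ∀ t, Ct t ⊂ C := by
        intro t
        constructor
        · rw [hCt]
          intro x hx
          rw [← hCzl]
          exact fun r hr => hx r (Ideal.mem_sup_left hr)
        · intro hsub
          have hmem : ∀ x ∈ C, eval x (lt t) = 0 := by
            intro x hx
            exact (hsub hx) (lt t) (Ideal.mem_sup_right (Ideal.subset_span rfl))
          have h1 := hmem a ha
          have h2 := hmem b0 hb0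
          simp only [hlt, map_sub, eval_X, eval_C, sub_eq_zero] at h1 h2
          exact hi (h1.trans h2.symm)
      have hIH : ∀ t : ℂ, ∃ J : Finset ℕ, Ct t ⊆ ⋃ j ∈ J, D j := fun t =>
        IH (Ct t) (vi_lt_of_ssubset (hCtzc t) (hCtsub t)) (hCtzc t)
          ((hCtsub t).subset.trans hcov)
      choose Jf hJf using hIH
      have huncount : ∃ J : Finset ℕ, ¬ {t : ℂ | Jf t = J}.Countable := by
        by_contra hcon
        push_neg at hcon
        have huniv : (⋃ J : Finset ℕ, {t : ℂ | Jf t = J}) = Set.univ := by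
          ext t
          simp
        have hcc : (Set.univ : Set ℂ).Countable := by
          rw [← huniv]
          exact Set.countable_iUnion fun J => hcon J
        haveI : Uncountable ℂ := Complex.ofReal_injective.uncountable
        exact not_countable (Set.countable_univ_iff.mp hcc)
      obtain ⟨J, hJ⟩ := huncount
      obtain ⟨K, hK⟩ := ZC.biUnion J D hD
      refine ⟨J, ?_⟩
      have hKle : K ≤ vanishingIdeal ℂ C := by
        intro p hpK
        by_contra hpP
        haveI : IsDomain (MvPolynomial (Fin n) ℂ ⧸ vanishingIdeal ℂ C) :=
          Ideal.Quotient.isDomain _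
        set bq := Ideal.Quotient.mk (vanishingIdeal ℂ C) p with hbq
        have hbq0 : bq ≠ 0 := by rwa [hbq, Ne, Ideal.Quotient.eq_zero_iff_mem]
        have hle : Submonoid.powers bq
            ≤ nonZeroDivisors (MvPolynomial (Fin n) ℂ ⧸ vanishingIdeal ℂ C) :=
          powers_le_nonZeroDivisors_of_noZeroDivisors hbq0
        haveI : IsDomain (Localization.Away bq) :=
          IsLocalization.isDomain_of_le_nonZeroDivisors
            (Localization.Away bq) hle
        have hunit : ∀ t ∈ {t : ℂ | Jf t = J},
            IsUnit (algebraMap (MvPolynomial (Fin n) ℂ ⧸ vanishingIdeal ℂ C)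
              (Localization.Away bq) (Ideal.Quotient.mk (vanishingIdeal ℂ C) (lt t))) := by
          intro t ht
          have hvan : p ∈ vanishingIdeal ℂ (Ct t) := by
            rw [mem_vanishingIdeal_iff]
            intro x hx
            have hxE : x ∈ ⋃ j ∈ J, D j := by
              have hx2 := hJf t hx
              rwa [show Jf t = J from ht] at hx2
            rw [hK] at hxE
            exact hxE p hpK
          rw [hCt] at hvan
          rw [vanishingIdeal_zeroLocus_eq_radical] at hvan
          obtain ⟨m, hm⟩ := Ideal.mem_radical_iff.mp hvan
          obtain ⟨α, hα, β', hβ', hsum'⟩ := Submodule.mem_sup.mp hm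
          obtain ⟨β, rfl⟩ := Ideal.mem_span_singleton'.mp hβ'
          have hq1 : bq ^ m = Ideal.Quotient.mk (vanishingIdeal ℂ C) β
              * Ideal.Quotient.mk (vanishingIdeal ℂ C) (lt t) := by
            rw [hbq, ← map_pow, ← hsum', map_add, ← map_mul,
              (Ideal.Quotient.eq_zero_iff_mem).mpr hα, zero_add]
          have hunit0 : IsUnit (algebraMap (MvPolynomial (Fin n) ℂ ⧸ vanishingIdeal ℂ C)
              (Localization.Away bq) (bq ^ m)) := by
            rw [map_pow]
            exact (IsLocalization.Away.algebraMap_isUnit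
              (S := Localization.Away bq) bq).pow m
          rw [hq1, map_mul] at hunit0
          exact isUnit_of_mul_isUnit_right hunit0
        set lam : Localization.Away bq :=
          algebraMap (MvPolynomial (Fin n) ℂ ⧸ vanishingIdeal ℂ C) (Localization.Away bq)
            (Ideal.Quotient.mk (vanishingIdeal ℂ C) (X i)) with hlam
        have hu : ∀ t ∈ {t : ℂ | Jf t = J},
            IsUnit (lam - algebraMap ℂ (Localization.Away bq) t) := by
          intro t ht
          have hiu := hunit t ht
          have heq : algebraMap (MvPolynomial (Fin n) ℂ ⧸ vanishingIdeal ℂ C)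
              (Localization.Away bq) (Ideal.Quotient.mk (vanishingIdeal ℂ C) (lt t))
              = lam - algebraMap ℂ (Localization.Away bq) t := by
            have hCt' : algebraMap (MvPolynomial (Fin n) ℂ ⧸ vanishingIdeal ℂ C)
                (Localization.Away bq)
                (Ideal.Quotient.mk (vanishingIdeal ℂ C) (MvPolynomial.C t))
                = algebraMap ℂ (Localization.Away bq) t := by
              rw [IsScalarTower.algebraMap_apply ℂ (MvPolynomial (Fin n) ℂ ⧸ vanishingIdeal ℂ C)
                (Localization.Away bq)]
              rfl
            rw [hlt, map_sub, map_sub, hlam, hCt']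
          rwa [heq] at hiu
        obtain ⟨r, hr⟩ := amitsur (rank_away_le _ bq) lam {t : ℂ | Jf t = J} hJ hu
        have hinj : Function.Injective
            (algebraMap (MvPolynomial (Fin n) ℂ ⧸ vanishingIdeal ℂ C) (Localization.Away bq)) :=
          IsLocalization.injective _ hle
        have hXi : Ideal.Quotient.mk (vanishingIdeal ℂ C) (X i - MvPolynomial.C r) = 0 := by
          apply hinj
          rw [map_zero, map_sub, map_sub]
          rw [← hlam, hr]
          have : algebraMap (MvPolynomial (Fin n) ℂ ⧸ vanishingIdeal ℂ C)
              (Localization.Away bq) (Ideal.Quotient.mk (vanishingIdeal ℂ C) (MvPolynomial.C r))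
              = algebraMap ℂ (Localization.Away bq) r := by
            rw [IsScalarTower.algebraMap_apply ℂ (MvPolynomial (Fin n) ℂ ⧸ vanishingIdeal ℂ C)
              (Localization.Away bq)]
            rfl
          rw [this, sub_self]
        rw [Ideal.Quotient.eq_zero_iff_mem] at hXi
        have h1 : eval a (X i - MvPolynomial.C r) = 0 := mem_vanishingIdeal_iff.mp hXi a ha
        have h2 : eval b0 (X i - MvPolynomial.C r) = 0 := mem_vanishingIdeal_iff.mp hXi b0 hb0
        simp only [map_sub, eval_X, eval_C, sub_eq_zero] at h1 h2
        exact hi (h1.trans h2.symm)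
      rw [hK]
      exact MvPolynomial.le_zeroLocus_iff_le_vanishingIdeal.mpr hKle


end Stmt0Aux

/- STATEMENT 0: A subset W of a finite-dimensional complex vector space (modeled as
`Fin n → ℂ`) that is Zariski-closed (zero set of a family of polynomial functions) and a
union of at most countably many linear subspaces is a finite union of linear subspaces. -/
theorem stmt0 (n : ℕ) (W : Set (Fin n → ℂ))
    (halg : ∃ S : Set (MvPolynomial (Fin n) ℂ),
      W = {v | ∀ p ∈ S, MvPolynomial.eval v p = 0})
    (hcount : ∃ f : ℕ → Submodule ℂ (Fin n → ℂ), W = ⋃ i, (f i : Set (Fin n → ℂ))) :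
    ∃ s : Finset (Submodule ℂ (Fin n → ℂ)),
      W = ⋃ U ∈ s, (U : Set (Fin n → ℂ)) := by
  classical
  obtain ⟨S, hS⟩ := halg
  obtain ⟨f, hf⟩ := hcount
  have hWzc : Stmt0Aux.ZC n W := ⟨Ideal.span S, by rw [hS, MvPolynomial.zeroLocus_span]; rfl⟩
  have hDzc : ∀ j, Stmt0Aux.ZC n ((f j : Set (Fin n → ℂ))) := fun j => Stmt0Aux.subspace_ZC (f j)
  have hcov : W ⊆ ⋃ j, (f j : Set (Fin n → ℂ)) := hf.le
  obtain ⟨J, hJ⟩ := Stmt0Aux.finite_subcover W hWzc _ hDzc hcov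
  refine ⟨J.image f, ?_⟩
  apply le_antisymm
  · intro x hx
    obtain ⟨j, hj1, hj2⟩ := Set.mem_iUnion₂.mp (hJ hx)
    exact Set.mem_iUnion₂.mpr ⟨f j, Finset.mem_image_of_mem f hj1, hj2⟩
  · intro x hx
    obtain ⟨U, hU1, hU2⟩ := Set.mem_iUnion₂.mp hx
    obtain ⟨j, hj, rfl⟩ := Finset.mem_image.mp hU1
    rw [hf]
    exact Set.mem_iUnion.mpr ⟨j, hU2⟩
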